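/- Let A = ℚ[a₁, a₂, …] be the polynomial ring in countably many variables, R = A[[q]], and consider in R[[z]] the series F_n(z) = 1 + ∑_{r≥1} a_r q^{nr} z^r for n ≥ 0; each F_n(z) has constant term 1 and hence is invertible in R[[z]]. Then the infinite product ∏_{n≥0} F_n(z)^{−1} converges coefficientwise (in the q-adic topology of R applied to each z-coefficient) to a series ∑_{m≥0} c_m z^m whose coefficients satisfy c₀ = 1 and (1 − q^m) c_m = − ∑_{r=1}^{m} a_r c_{m−r} for every m ≥ 1; since 1 − q^m is invertible in R, this recursion determines the c_m uniquely. Moreover each c_m is weighted homogeneous of degree m in the variables a_r when a_r is assigned degree r. -/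

import Mathlib

open PowerSeries

noncomputable section

/-- `A = ℚ[a₁, a₂, …]`: the variable `a_r` (for `r ≥ 1`) is `MvPolynomial.X (r-1)`. -/
abbrev A : Type := MvPolynomial ℕ ℚ

/-- `R = A[[q]]`. -/
abbrev R : Type := PowerSeries A

/-- `a_r = X (r-1) ∈ A`, of weighted degree `r` for the weight `i ↦ i + 1`. -/
def a (r : ℕ) : A := MvPolynomial.X (r - 1)

/-- `F_n(z) = 1 + ∑_{r≥1} a_r q^{nr} z^r ∈ R[[z]]`. -/
def Fser (n : ℕ) : PowerSeries R :=
  PowerSeries.mk fun r =>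
    if r = 0 then 1 else PowerSeries.C (R := A) (a r) * (PowerSeries.X : R) ^ (n * r)

/-! ### Auxiliary definitions and lemmas -/

/-- The inverse of `1 - q^m` in `R`. -/
def invXm (m : ℕ) : R := PowerSeries.mk fun k => if m ∣ k then 1 else 0

lemma one_sub_X_pow_mul_invXm (m : ℕ) (hm : 1 ≤ m) :
    (1 - (PowerSeries.X : R) ^ m) * invXm m = 1 := by
  ext k
  rw [sub_mul, one_mul, map_sub, PowerSeries.coeff_X_pow_mul']
  simp only [invXm, PowerSeries.coeff_mk, PowerSeries.coeff_one]
  rcases Nat.eq_zero_or_pos k with rfl | hk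
  · have : ¬ m ≤ 0 := by omega
    simp [this]
  · by_cases hmk : m ≤ k
    · rw [if_pos hmk]
      have hdvd : m ∣ k ↔ m ∣ k - m := by
        constructor
        · intro h; exact Nat.dvd_sub h dvd_rfl
        · intro h
          have := Nat.dvd_add h (dvd_refl m)
          rwa [Nat.sub_add_cancel hmk] at this
      rw [if_neg hk.ne']
      by_cases h : m ∣ k
      · rw [if_pos h, if_pos (hdvd.mp h), sub_self]
      · rw [if_neg h, if_neg (fun hh => h (hdvd.mpr hh)), sub_self]
    · rw [if_neg hmk, if_neg hk.ne', sub_zero, if_neg]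
      exact fun h => hmk (Nat.le_of_dvd hk h)

lemma isUnit_one_sub_X_pow (m : ℕ) (hm : 1 ≤ m) :
    IsUnit (1 - (PowerSeries.X : R) ^ m) :=
  IsUnit.of_mul_eq_one _ (one_sub_X_pow_mul_invXm m hm)

/-- The sequence `c` defined by the recursion. -/
def cseq : ℕ → R
  | 0 => 1
  | (m + 1) =>
      invXm (m + 1) *
        (-(∑ i ∈ (Finset.range (m + 1)).attach,
            PowerSeries.C (R := A) (a (m + 1 - i.1)) * cseq i.1))
  decreasing_by exact Finset.mem_range.mp i.2

lemma cseq_zero : cseq 0 = 1 := by simp [cseq]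

lemma sum_reindex' {M : Type*} [AddCommMonoid M] (m : ℕ) (f : ℕ → ℕ → M) :
    ∑ r ∈ Finset.Icc 1 m, f r (m - r) = ∑ i ∈ Finset.range m, f (m - i) i := by
  rw [← Finset.sum_range_reflect (fun i => f (m - i) i) m]
  rw [← Finset.Ico_add_one_right_eq_Icc, Finset.sum_Ico_eq_sum_range]
  have hm : m + 1 - 1 = m := by omega
  rw [hm]
  apply Finset.sum_congr rfl
  intro j hj
  have hj' : j < m := Finset.mem_range.mp hj
  have h1 : 1 + j = m - (m - 1 - j) := by omega
  have h2 : m - (1 + j) = m - 1 - j := by omega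
  rw [h2, h1]

lemma cseq_rec (m : ℕ) (hm : 1 ≤ m) :
    (1 - (PowerSeries.X : R) ^ m) * cseq m =
      -∑ r ∈ Finset.Icc 1 m, PowerSeries.C (R := A) (a r) * cseq (m - r) := by
  obtain ⟨m', rfl⟩ : ∃ m', m = m' + 1 := ⟨m - 1, by omega⟩
  rw [show cseq (m' + 1) = invXm (m' + 1) *
        (-(∑ i ∈ (Finset.range (m' + 1)).attach,
            PowerSeries.C (R := A) (a (m' + 1 - i.1)) * cseq i.1)) from by rw [cseq]]
  rw [← mul_assoc, one_sub_X_pow_mul_invXm _ (by omega), one_mul, neg_inj]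
  rw [Finset.sum_attach (Finset.range (m' + 1))
      (fun i => PowerSeries.C (R := A) (a (m' + 1 - i)) * cseq i)]
  exact (sum_reindex' (m' + 1) (fun r s => PowerSeries.C (R := A) (a r) * cseq s)).symm

lemma cseq_unique (c' : ℕ → R) (h0 : c' 0 = 1)
    (hrec : ∀ m : ℕ, 1 ≤ m →
      (1 - (PowerSeries.X : R) ^ m) * c' m =
        -∑ r ∈ Finset.Icc 1 m, PowerSeries.C (R := A) (a r) * c' (m - r)) :
    c' = cseq := by
  funext m
  induction m using Nat.strong_induction_on with
  | _ m ih =>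
    rcases Nat.eq_zero_or_pos m with rfl | hm
    · rw [h0, cseq_zero]
    · apply (isUnit_one_sub_X_pow m hm).mul_left_cancel
      rw [hrec m hm, cseq_rec m hm, neg_inj]
      apply Finset.sum_congr rfl
      intro r hr
      have hr' := Finset.mem_Icc.mp hr
      rw [ih (m - r) (by omega)]

/-! ### Homogeneity -/

/-- All `q`-coefficients of `S` are weighted homogeneous of degree `m`. -/
def Hdeg (m : ℕ) (S : R) : Prop :=
  ∀ k : ℕ, MvPolynomial.IsWeightedHomogeneous (fun i => i + 1)
    (PowerSeries.coeff (R := A) k S) m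

lemma Hdeg_one : Hdeg 0 1 := by
  intro k
  rw [PowerSeries.coeff_one]
  split_ifs
  · exact MvPolynomial.isWeightedHomogeneous_one ℚ _
  · exact MvPolynomial.isWeightedHomogeneous_zero ℚ _ _

lemma Hdeg_invXm (m : ℕ) : Hdeg 0 (invXm m) := by
  intro k
  simp only [invXm, PowerSeries.coeff_mk]
  split_ifs
  · exact MvPolynomial.isWeightedHomogeneous_one ℚ _
  · exact MvPolynomial.isWeightedHomogeneous_zero ℚ _ _

lemma Hdeg_neg {m : ℕ} {S : R} (h : Hdeg m S) : Hdeg m (-S) := by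
  intro k
  rw [map_neg]
  have := (MvPolynomial.mem_weightedHomogeneousSubmodule _ _ _ _).mpr (h k)
  exact (MvPolynomial.mem_weightedHomogeneousSubmodule _ _ _ _).mp (neg_mem this)

lemma Hdeg_sum {m : ℕ} {ι : Type*} (s : Finset ι) (f : ι → R)
    (h : ∀ i ∈ s, Hdeg m (f i)) : Hdeg m (∑ i ∈ s, f i) := by
  intro k
  rw [map_sum]
  rw [← MvPolynomial.mem_weightedHomogeneousSubmodule]
  exact Submodule.sum_mem _ fun i hi =>
    (MvPolynomial.mem_weightedHomogeneousSubmodule _ _ _ _).mpr (h i hi k)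

lemma Hdeg_mul {m n : ℕ} {S T : R} (hS : Hdeg m S) (hT : Hdeg n T) :
    Hdeg (m + n) (S * T) := by
  intro k
  rw [PowerSeries.coeff_mul]
  rw [← MvPolynomial.mem_weightedHomogeneousSubmodule]
  exact Submodule.sum_mem _ fun p _ =>
    (MvPolynomial.mem_weightedHomogeneousSubmodule _ _ _ _).mpr
      ((hS p.1).mul (hT p.2))

lemma Hdeg_C_a (r : ℕ) (hr : 1 ≤ r) : Hdeg r (PowerSeries.C (R := A) (a r)) := by
  intro k
  rw [PowerSeries.coeff_C]
  split_ifs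
  · have := MvPolynomial.isWeightedHomogeneous_X (R := ℚ) (fun i => i + 1) (r - 1)
    simpa [a, Nat.sub_add_cancel hr] using this
  · exact MvPolynomial.isWeightedHomogeneous_zero ℚ _ _

lemma Hdeg_cseq (m : ℕ) : Hdeg m (cseq m) := by
  induction m using Nat.strong_induction_on with
  | _ m ih =>
    rcases Nat.eq_zero_or_pos m with rfl | hm
    · rw [cseq_zero]; exact Hdeg_one
    · obtain ⟨m', rfl⟩ : ∃ m', m = m' + 1 := ⟨m - 1, by omega⟩
      rw [show cseq (m' + 1) = invXm (m' + 1) *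
            (-(∑ i ∈ (Finset.range (m' + 1)).attach,
                PowerSeries.C (R := A) (a (m' + 1 - i.1)) * cseq i.1)) from by rw [cseq]]
      have : Hdeg (m' + 1)
          (∑ i ∈ (Finset.range (m' + 1)).attach,
            PowerSeries.C (R := A) (a (m' + 1 - i.1)) * cseq i.1) := by
        apply Hdeg_sum
        intro i _
        have hi : i.1 < m' + 1 := Finset.mem_range.mp i.2
        have heq : (m' + 1 - i.1) + i.1 = m' + 1 := by omega
        have := Hdeg_mul (Hdeg_C_a (m' + 1 - i.1) (by omega)) (ih i.1 hi)
        rwa [heq] at this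
      have h2 := Hdeg_mul (Hdeg_invXm (m' + 1)) (Hdeg_neg this)
      rwa [zero_add] at h2

/-! ### The partial products and their inverses -/

lemma constantCoeff_Fser (n : ℕ) : PowerSeries.constantCoeff (R := R) (Fser n) = 1 := by
  have : PowerSeries.coeff (R := R) 0 (Fser n) = 1 := by simp [Fser]
  rwa [PowerSeries.coeff_zero_eq_constantCoeff] at this

lemma isUnit_Fser (n : ℕ) : IsUnit (Fser n) := by
  rw [PowerSeries.isUnit_iff_constantCoeff, constantCoeff_Fser]
  exact isUnit_one

lemma isUnit_prod_Fser (N : ℕ) : IsUnit (∏ n ∈ Finset.range (N + 1), Fser n) := by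
  rw [PowerSeries.isUnit_iff_constantCoeff, map_prod]
  simp only [constantCoeff_Fser, Finset.prod_const_one]
  exact isUnit_one

lemma rescale_Fser (n : ℕ) :
    PowerSeries.rescale (PowerSeries.X : R) (Fser n) = Fser (n + 1) := by
  ext r
  rw [PowerSeries.coeff_rescale]
  simp only [Fser, PowerSeries.coeff_mk]
  rcases Nat.eq_zero_or_pos r with rfl | hr
  · simp
  · rw [if_neg hr.ne', if_neg hr.ne']
    rw [show (n + 1) * r = n * r + r by ring, pow_add]
    ring_nf

lemma funct_eq (N : ℕ) :
    Fser 0 * PowerSeries.rescale (PowerSeries.X : R) (∏ n ∈ Finset.range (N + 1), Fser n)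
      = (∏ n ∈ Finset.range (N + 1), Fser n) * Fser (N + 1) := by
  rw [map_prod]
  simp only [rescale_Fser]
  rw [← Finset.prod_range_succ (fun n => Fser n) (N + 1),
    Finset.prod_range_succ' (fun n => Fser n) (N + 1)]
  ring

lemma inv_funct_eq (N : ℕ) :
    Ring.inverse (∏ n ∈ Finset.range (N + 1), Fser n) * Fser 0
        * Ring.inverse (Fser (N + 1))
      = PowerSeries.rescale (PowerSeries.X : R)
          (Ring.inverse (∏ n ∈ Finset.range (N + 1), Fser n)) := by
  set P := ∏ n ∈ Finset.range (N + 1), Fser n with hP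
  set G := Ring.inverse P with hG
  have hu : IsUnit P := isUnit_prod_Fser N
  have h1 : G * P = 1 := Ring.inverse_mul_cancel _ hu
  have h2 : Ring.inverse (Fser (N + 1)) * Fser (N + 1) = 1 :=
    Ring.inverse_mul_cancel _ (isUnit_Fser (N + 1))
  have huP : IsUnit (PowerSeries.rescale (PowerSeries.X : R) P) := hu.map _
  apply huP.mul_right_cancel
  have key : (G * Fser 0 * Ring.inverse (Fser (N + 1)))
      * PowerSeries.rescale (PowerSeries.X : R) P = 1 := by
    calc (G * Fser 0 * Ring.inverse (Fser (N + 1)))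
        * PowerSeries.rescale (PowerSeries.X : R) P
        = (G * Ring.inverse (Fser (N + 1)))
            * (Fser 0 * PowerSeries.rescale (PowerSeries.X : R) P) := by ring
      _ = (G * Ring.inverse (Fser (N + 1))) * (P * Fser (N + 1)) := by rw [funct_eq]
      _ = (G * P) * (Ring.inverse (Fser (N + 1)) * Fser (N + 1)) := by ring
      _ = 1 := by rw [h1, h2, one_mul]
  rw [key, ← map_mul, h1, map_one]

/-! ### Error estimates -/

lemma err_mul (n : ℕ) (u : PowerSeries R) (m k : ℕ) (hk : k < n) :
    PowerSeries.coeff (R := A) k (PowerSeries.coeff (R := R) m ((Fser n - 1) * u)) = 0 := by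
  rw [PowerSeries.coeff_mul, map_sum]
  apply Finset.sum_eq_zero
  rintro ⟨i, j⟩ _
  rcases Nat.eq_zero_or_pos i with rfl | hi
  · have : PowerSeries.coeff (R := R) 0 (Fser n - 1) = 0 := by
      simp [Fser, PowerSeries.coeff_one]
    simp [this]
  · have hco : PowerSeries.coeff (R := R) i (Fser n - 1)
        = PowerSeries.C (R := A) (a i) * (PowerSeries.X : R) ^ (n * i) := by
      simp [Fser, PowerSeries.coeff_one, hi.ne']
    rw [hco, mul_comm (PowerSeries.C (R := A) (a i)) ((PowerSeries.X : R) ^ (n * i)),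
      mul_assoc, PowerSeries.coeff_X_pow_mul', if_neg]
    have : n ≤ n * i := Nat.le_mul_of_pos_right n hi
    omega

lemma err_inv (n m k : ℕ) (hk : k < n) :
    PowerSeries.coeff (R := A) k (PowerSeries.coeff (R := R) m (Ring.inverse (Fser n) - 1)) = 0 := by
  set E := Ring.inverse (Fser n) with hE
  have h1 : Fser n * E = 1 := Ring.mul_inverse_cancel _ (isUnit_Fser n)
  have h2 : E - 1 = -((Fser n - 1) * E) := by
    rw [sub_mul, h1, one_mul]; ring
  rw [h2, map_neg, map_neg, err_mul n E m k hk, neg_zero]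

lemma err_mul_left (n : ℕ) (u v : PowerSeries R)
    (hv : ∀ m k : ℕ, k < n → PowerSeries.coeff (R := A) k (PowerSeries.coeff (R := R) m v) = 0)
    (m k : ℕ) (hk : k < n) :
    PowerSeries.coeff (R := A) k (PowerSeries.coeff (R := R) m (u * v)) = 0 := by
  rw [PowerSeries.coeff_mul, map_sum]
  apply Finset.sum_eq_zero
  rintro ⟨i, j⟩ _
  rw [PowerSeries.coeff_mul]
  apply Finset.sum_eq_zero
  rintro ⟨p, q⟩ hpq
  have hq : q ≤ k := by
    have := Finset.HasAntidiagonal.mem_antidiagonal.mp hpq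
    omega
  rw [hv j q (by omega), mul_zero]

lemma coeff_zero_inv_prod (N : ℕ) :
    PowerSeries.coeff (R := R) 0 (Ring.inverse (∏ n ∈ Finset.range (N + 1), Fser n)) = 1 := by
  set P := ∏ n ∈ Finset.range (N + 1), Fser n with hP
  have h1 : P * Ring.inverse P = 1 := Ring.mul_inverse_cancel _ (isUnit_prod_Fser N)
  have h2 := congrArg (PowerSeries.constantCoeff (R := R)) h1
  rw [map_mul, map_one] at h2
  have h3 : PowerSeries.constantCoeff (R := R) P = 1 := by
    rw [hP, map_prod]
    simp [constantCoeff_Fser]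
  rw [h3, one_mul] at h2
  rw [PowerSeries.coeff_zero_eq_constantCoeff]
  exact h2

/-! ### The main computation -/

lemma main_eq (m : ℕ) : ∀ N k : ℕ, k ≤ N →
    PowerSeries.coeff (R := A) k
        (PowerSeries.coeff (R := R) m (Ring.inverse (∏ n ∈ Finset.range (N + 1), Fser n)))
      = PowerSeries.coeff (R := A) k (cseq m) := by
  induction m using Nat.strong_induction_on with
  | _ m ihm =>
    rcases Nat.eq_zero_or_pos m with rfl | hm
    · intro N k _
      rw [coeff_zero_inv_prod, cseq_zero]
    · intro N k
      induction k using Nat.strong_induction_on with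
      | _ k ihk =>
        intro hk
        set P := ∏ n ∈ Finset.range (N + 1), Fser n with hP
        set G := Ring.inverse P with hG
        -- coefficient expansion of G * Fser 0
        have hsplit : PowerSeries.coeff (R := R) m (G * Fser 0)
            = PowerSeries.coeff (R := R) m G
              + ∑ i ∈ Finset.range m,
                  PowerSeries.C (R := A) (a (m - i)) * PowerSeries.coeff (R := R) i G := by
          rw [PowerSeries.coeff_mul, Finset.Nat.sum_antidiagonal_eq_sum_range_succ_mk,
            Finset.sum_range_succ]
          have h0 : PowerSeries.coeff (R := R) (m - m) (Fser 0) = 1 := by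
            simp [Fser]
          rw [h0, mul_one, add_comm]
          congr 1
          apply Finset.sum_congr rfl
          intro i hi
          have hne : m - i ≠ 0 := by
            have := Finset.mem_range.mp hi; omega
          simp only [Fser, PowerSeries.coeff_mk, if_neg hne, Nat.zero_mul, pow_zero,
            mul_one]
          ring
        -- functional equation
        have hfe := inv_funct_eq N
        rw [← hP, ← hG] at hfe
        have hEsplit : G * Fser 0 * Ring.inverse (Fser (N + 1))
            = G * Fser 0 + (G * Fser 0) * (Ring.inverse (Fser (N + 1)) - 1) := by
          ring
        have hkey : PowerSeries.coeff (R := A) k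
            (PowerSeries.coeff (R := R) m (PowerSeries.rescale (PowerSeries.X : R) G))
            = PowerSeries.coeff (R := A) k (PowerSeries.coeff (R := R) m (G * Fser 0)) := by
          rw [← hfe, hEsplit, map_add, map_add,
            err_mul_left (N + 1) (G * Fser 0) _ (fun m' k' hk' => err_inv (N + 1) m' k' hk')
              m k (show k < N + 1 by omega),
            add_zero]
        rw [PowerSeries.coeff_rescale] at hkey
        rw [hsplit] at hkey
        rw [map_add, map_sum, PowerSeries.coeff_X_pow_mul'] at hkey
        -- equation for G coefficients
        have E1 : PowerSeries.coeff (R := A) k (PowerSeries.coeff (R := R) m G)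
            = (if m ≤ k then PowerSeries.coeff (R := A) (k - m) (PowerSeries.coeff (R := R) m G) else 0)
              - ∑ i ∈ Finset.range m,
                  a (m - i) * PowerSeries.coeff (R := A) k (PowerSeries.coeff (R := R) i G) := by
          simp only [PowerSeries.coeff_C_mul] at hkey
          linear_combination -hkey
        -- equation for cseq coefficients
        have hc := cseq_rec m hm
        have hc2 : cseq m = (PowerSeries.X : R) ^ m * cseq m
            - ∑ r ∈ Finset.Icc 1 m, PowerSeries.C (R := A) (a r) * cseq (m - r) := by
          have : (1 - (PowerSeries.X : R) ^ m) * cseq m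
              = cseq m - (PowerSeries.X : R) ^ m * cseq m := by ring
          rw [this] at hc
          linear_combination hc
        have E2 : PowerSeries.coeff (R := A) k (cseq m)
            = (if m ≤ k then PowerSeries.coeff (R := A) (k - m) (cseq m) else 0)
              - ∑ i ∈ Finset.range m,
                  a (m - i) * PowerSeries.coeff (R := A) k (cseq i) := by
          conv_lhs => rw [hc2]
          rw [map_sub, PowerSeries.coeff_X_pow_mul', map_sum]
          congr 1
          rw [← sum_reindex' m (fun r s => a r * PowerSeries.coeff (R := A) k (cseq s))]
          apply Finset.sum_congr rfl
          intro r _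
          rw [PowerSeries.coeff_C_mul]
        rw [E1, E2]
        congr 1
        · split_ifs with h
          · exact ihk (k - m) (by omega) (by omega)
          · rfl
        · apply Finset.sum_congr rfl
          intro i hi
          have hi' : i < m := Finset.mem_range.mp hi
          rw [ihm i hi' N k hk]

/-! ### The theorem -/

theorem infinite_product_inverse_recursion :
    -- each `F_n(z)` (having constant term `1`) is invertible in `R[[z]]`
    (∀ n : ℕ, IsUnit (Fser n)) ∧
    ∃ c : ℕ → R,
      -- coefficientwise convergence of the partial products `∏_{n=0}^{N} F_n(z)⁻¹`
      -- (computed via `Ring.inverse`) to `∑ c_m z^m`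
      (∀ m k : ℕ, ∃ N₀ : ℕ, ∀ N : ℕ, N₀ ≤ N →
        PowerSeries.coeff (R := A) k
            (PowerSeries.coeff (R := R) m (Ring.inverse (∏ n ∈ Finset.range (N + 1), Fser n))) =
          PowerSeries.coeff (R := A) k (c m)) ∧
      c 0 = 1 ∧
      -- the recursion `(1 - q^m) c_m = -∑_{r=1}^{m} a_r c_{m-r}`
      (∀ m : ℕ, 1 ≤ m →
        (1 - (PowerSeries.X : R) ^ m) * c m =
          -∑ r ∈ Finset.Icc 1 m, PowerSeries.C (R := A) (a r) * c (m - r)) ∧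
      -- `1 - q^m` is invertible in `R`
      (∀ m : ℕ, 1 ≤ m → IsUnit (1 - (PowerSeries.X : R) ^ m)) ∧
      -- hence the recursion determines the `c_m` uniquely
      (∀ c' : ℕ → R, c' 0 = 1 →
        (∀ m : ℕ, 1 ≤ m →
          (1 - (PowerSeries.X : R) ^ m) * c' m =
            -∑ r ∈ Finset.Icc 1 m, PowerSeries.C (R := A) (a r) * c' (m - r)) →
        c' = c) ∧
      -- each `c_m` is weighted homogeneous of degree `m` when `a_r` has degree `r`
      (∀ m k : ℕ,
        MvPolynomial.IsWeightedHomogeneous (fun i => i + 1)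
          (PowerSeries.coeff (R := A) k (c m)) m) := by
  refine ⟨isUnit_Fser, cseq, ?_, cseq_zero, cseq_rec, isUnit_one_sub_X_pow,
    cseq_unique, fun m k => Hdeg_cseq m k⟩
  intro m k
  exact ⟨k, fun N hN => main_eq m N k hN⟩
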